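/- Let Ω : ℝ → ℝ³ be continuous, let Q : ℝ → ℝ^{3×3} be differentiable with Q(t) ∈ SO(3) and Q̇(t) = Q(t)Ω(t)_× for all t, and let Ā : ℝ → ℝ^{5×5} be continuous. Set T(t) := I₅ ⊗ Q(t) ∈ ℝ^{15×15}. If x : ℝ → ℝ^{15} is differentiable and satisfies ẋ(t) = (Ā(t) ⊗ I₃ − I₅ ⊗ Ω(t)_×) x(t) for all t, then the transformed trajectory x̄(t) := T(t)x(t) satisfies d/dt x̄(t) = (Ā(t) ⊗ I₃) x̄(t) for all t. -/

import Mathlib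

open Matrix
open scoped Kronecker

/-- For `ω ∈ ℝ³`, the skew-symmetric matrix `ω_×` with `ω_× v = ω × v`. -/
def skew (ω : Fin 3 → ℝ) : Matrix (Fin 3) (Fin 3) ℝ :=
  !![0, -ω 2, ω 1; ω 2, 0, -ω 0; -ω 1, ω 0, 0]

/-- The differentiation step in the proof of Lemma 3: with `Q(t) ∈ SO(3)`,
`Q̇ = QΩ_×`, and `T(t) = I₅ ⊗ Q(t)`, any solution of
`ẋ = (Ā(t) ⊗ I₃ − I₅ ⊗ Ω(t)_×) x` is transformed by `x̄ = T x` into a solution of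
`d/dt x̄ = (Ā(t) ⊗ I₃) x̄`.  `ℝ^{15}` is realized as `Fin 5 × Fin 3 → ℝ`, and
derivatives of vector-valued functions are taken componentwise. -/
theorem stmt3
    (Ω : ℝ → Fin 3 → ℝ) (hΩ_cont : Continuous Ω)
    (Q : ℝ → Matrix (Fin 3) (Fin 3) ℝ)
    (hQ_SO : ∀ t, (Q t)ᵀ * Q t = 1 ∧ (Q t).det = 1)
    (hQ_deriv : ∀ t i j, HasDerivAt (fun u => Q u i j) ((Q t * skew (Ω t)) i j) t)
    (Abar : ℝ → Matrix (Fin 5) (Fin 5) ℝ) (hAbar_cont : Continuous Abar)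
    (x : ℝ → Fin 5 × Fin 3 → ℝ)
    (hx : ∀ t p, HasDerivAt (fun u => x u p)
      (((Abar t ⊗ₖ (1 : Matrix (Fin 3) (Fin 3) ℝ)
          - (1 : Matrix (Fin 5) (Fin 5) ℝ) ⊗ₖ skew (Ω t)).mulVec (x t)) p) t) :
    ∀ t p, HasDerivAt
      (fun u => (((1 : Matrix (Fin 5) (Fin 5) ℝ) ⊗ₖ Q u).mulVec (x u)) p)
      (((Abar t ⊗ₖ (1 : Matrix (Fin 3) (Fin 3) ℝ)).mulVec
        (((1 : Matrix (Fin 5) (Fin 5) ℝ) ⊗ₖ Q t).mulVec (x t))) p) t := by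
  intro t p
  set S := skew (Ω t) with hS
  set x' : Fin 5 × Fin 3 → ℝ :=
    (Abar t ⊗ₖ (1 : Matrix (Fin 3) (Fin 3) ℝ)
      - (1 : Matrix (Fin 5) (Fin 5) ℝ) ⊗ₖ S).mulVec (x t) with hx'def
  have h1 : HasDerivAt
      (fun u => (((1 : Matrix (Fin 5) (Fin 5) ℝ) ⊗ₖ Q u).mulVec (x u)) p)
      ((((1 : Matrix (Fin 5) (Fin 5) ℝ) ⊗ₖ (Q t * S)).mulVec (x t)
        + ((1 : Matrix (Fin 5) (Fin 5) ℝ) ⊗ₖ Q t).mulVec x') p) t := by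
    have hfun : ∀ u, (((1 : Matrix (Fin 5) (Fin 5) ℝ) ⊗ₖ Q u).mulVec (x u)) p
        = ∑ q : Fin 5 × Fin 3,
            (1 : Matrix (Fin 5) (Fin 5) ℝ) p.1 q.1 * Q u p.2 q.2 * x u q := by
      intro u
      simp [Matrix.mulVec, dotProduct, Matrix.kroneckerMap_apply]
    have hval : ((((1 : Matrix (Fin 5) (Fin 5) ℝ) ⊗ₖ (Q t * S)).mulVec (x t)
          + ((1 : Matrix (Fin 5) (Fin 5) ℝ) ⊗ₖ Q t).mulVec x') p)
        = ∑ q : Fin 5 × Fin 3,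
            ((1 : Matrix (Fin 5) (Fin 5) ℝ) p.1 q.1 * (Q t * S) p.2 q.2 * x t q
             + (1 : Matrix (Fin 5) (Fin 5) ℝ) p.1 q.1 * Q t p.2 q.2 * x' q) := by
      simp [Matrix.mulVec, dotProduct, Matrix.kroneckerMap_apply,
        Finset.sum_add_distrib]
    simp only [hfun]
    rw [hval]
    refine HasDerivAt.fun_sum fun q _ => ?_
    have hq : HasDerivAt (fun u => x u q) (x' q) t := by
      rw [hx'def]; exact hx t q
    exact (((hQ_deriv t p.2 q.2).const_mul
      ((1 : Matrix (Fin 5) (Fin 5) ℝ) p.1 q.1)).mul hq)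
  have h2 : (((1 : Matrix (Fin 5) (Fin 5) ℝ) ⊗ₖ (Q t * S)).mulVec (x t)
        + ((1 : Matrix (Fin 5) (Fin 5) ℝ) ⊗ₖ Q t).mulVec x')
      = (Abar t ⊗ₖ (1 : Matrix (Fin 3) (Fin 3) ℝ)).mulVec
          (((1 : Matrix (Fin 5) (Fin 5) ℝ) ⊗ₖ Q t).mulVec (x t)) := by
    rw [hx'def, Matrix.mulVec_mulVec, Matrix.mulVec_mulVec, mul_sub,
      ← Matrix.mul_kronecker_mul, ← Matrix.mul_kronecker_mul,
      ← Matrix.mul_kronecker_mul]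
    simp [Matrix.sub_mulVec, Matrix.add_mulVec]
  rw [← h2]
  exact h1
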